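/- Boolean Duality for THT: let δ(φ) replace each connective in an implication-free formula φ by its dual (∧/∨, ⊤/⊥, U/R, ○/ŏ, □/◇, S/T, ●/ŏ-past, ■/♦). Then for implication-free formulas φ, ψ, φ and ψ are THT-equivalent iff δ(φ) and δ(ψ) are THT-equivalent. -/
import Mathlib


open scoped Classical

/-- Temporal formulas over atoms `α`, with past and future operators. -/
inductive TForm (α : Type) : Type
  | atom : α → TForm α
  | bot  : TForm α
  | top  : TForm α
  | and  : TForm α → TForm α → TForm α
  | or   : TForm α → TForm α → TForm α
  | imp  : TForm α → TForm α → TForm α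
  | prev : TForm α → TForm α            -- ● previous
  | wprev : TForm α → TForm α           -- weak previous
  | since : TForm α → TForm α → TForm α -- S
  | trigger : TForm α → TForm α → TForm α -- T
  | next : TForm α → TForm α            -- ○ next
  | wnext : TForm α → TForm α           -- weak next
  | untl : TForm α → TForm α → TForm α  -- U
  | rels : TForm α → TForm α → TForm α  -- R

variable {α : Type}

/-- THT satisfaction: `sat lam φ H T k` means ⟨H,T⟩,k ⊨ φ on an HT-trace of length `lam`. -/
def sat (lam : ℕ∞) : TForm α → (ℕ → Set α) → (ℕ → Set α) → ℕ → Prop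
  | .atom a, H, _, k => a ∈ H k
  | .bot, _, _, _ => False
  | .top, _, _, _ => True
  | .and φ ψ, H, T, k => sat lam φ H T k ∧ sat lam ψ H T k
  | .or φ ψ, H, T, k => sat lam φ H T k ∨ sat lam ψ H T k
  | .imp φ ψ, H, T, k =>
      (sat lam φ H T k → sat lam ψ H T k) ∧ (sat lam φ T T k → sat lam ψ T T k)
  | .prev φ, H, T, k => 0 < k ∧ sat lam φ H T (k - 1)
  | .wprev φ, H, T, k => k = 0 ∨ sat lam φ H T (k - 1)
  | .since φ ψ, H, T, k =>
      ∃ j, j ≤ k ∧ sat lam ψ H T j ∧ ∀ i, j < i → i ≤ k → sat lam φ H T i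
  | .trigger φ ψ, H, T, k =>
      ∀ j, j ≤ k → sat lam ψ H T j ∨ ∃ i, j < i ∧ i ≤ k ∧ sat lam φ H T i
  | .next φ, H, T, k => ((k : ℕ∞) + 1 ≤ lam) ∧ sat lam φ H T (k + 1)
  | .wnext φ, H, T, k => ¬ ((k : ℕ∞) + 1 ≤ lam) ∨ sat lam φ H T (k + 1)
  | .untl φ ψ, H, T, k =>
      ∃ j, k ≤ j ∧ (j : ℕ∞) ≤ lam ∧ sat lam ψ H T j ∧ ∀ i, k ≤ i → i < j → sat lam φ H T i
  | .rels φ ψ, H, T, k =>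
      ∀ j, k ≤ j → (j : ℕ∞) ≤ lam → sat lam ψ H T j ∨ ∃ i, k ≤ i ∧ i < j ∧ sat lam φ H T i

/-- Classical LTL satisfaction on a (possibly finite) trace `T` of length `lam`. -/
def satL (lam : ℕ∞) : TForm α → (ℕ → Set α) → ℕ → Prop
  | .atom a, T, k => a ∈ T k
  | .bot, _, _ => False
  | .top, _, _ => True
  | .and φ ψ, T, k => satL lam φ T k ∧ satL lam ψ T k
  | .or φ ψ, T, k => satL lam φ T k ∨ satL lam ψ T k
  | .imp φ ψ, T, k => satL lam φ T k → satL lam ψ T k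
  | .prev φ, T, k => 0 < k ∧ satL lam φ T (k - 1)
  | .wprev φ, T, k => k = 0 ∨ satL lam φ T (k - 1)
  | .since φ ψ, T, k =>
      ∃ j, j ≤ k ∧ satL lam ψ T j ∧ ∀ i, j < i → i ≤ k → satL lam φ T i
  | .trigger φ ψ, T, k =>
      ∀ j, j ≤ k → satL lam ψ T j ∨ ∃ i, j < i ∧ i ≤ k ∧ satL lam φ T i
  | .next φ, T, k => ((k : ℕ∞) + 1 ≤ lam) ∧ satL lam φ T (k + 1)
  | .wnext φ, T, k => ¬ ((k : ℕ∞) + 1 ≤ lam) ∨ satL lam φ T (k + 1)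
  | .untl φ ψ, T, k =>
      ∃ j, k ≤ j ∧ (j : ℕ∞) ≤ lam ∧ satL lam ψ T j ∧ ∀ i, k ≤ i → i < j → satL lam φ T i
  | .rels φ ψ, T, k =>
      ∀ j, k ≤ j → (j : ℕ∞) ≤ lam → satL lam ψ T j ∨ ∃ i, k ≤ i ∧ i < j ∧ satL lam φ T i

/-- ¬φ := φ → ⊥ -/
def TForm.neg (φ : TForm α) : TForm α := .imp φ .bot
/-- F (final) := ¬○⊤ -/
def TForm.F : TForm α := TForm.neg (.next .top)
/-- I (initial) := ¬●⊤ -/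
def TForm.I : TForm α := TForm.neg (.prev .top)
/-- □φ := ⊥ R φ (always afterward) -/
def TForm.always (φ : TForm α) : TForm α := .rels .bot φ
/-- ◇φ := ⊤ U φ (eventually afterward) -/
def TForm.ev (φ : TForm α) : TForm α := .untl .top φ
/-- ■φ := ⊥ T φ (always before) -/
def TForm.alwaysB (φ : TForm α) : TForm α := .trigger .bot φ
/-- ♦φ := ⊤ S φ (eventually before) -/
def TForm.evB (φ : TForm α) : TForm α := .since .top φ

/-- ⟨H,T⟩ is an HT-trace: H_i ⊆ T_i for all i. -/
def isHT (H T : ℕ → Set α) : Prop := ∀ i, H i ⊆ T i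

/-- Implication-free formulas. -/
def ImpFree : TForm α → Prop
  | .imp _ _ => False
  | .and φ ψ => ImpFree φ ∧ ImpFree ψ
  | .or φ ψ => ImpFree φ ∧ ImpFree ψ
  | .since φ ψ => ImpFree φ ∧ ImpFree ψ
  | .trigger φ ψ => ImpFree φ ∧ ImpFree ψ
  | .untl φ ψ => ImpFree φ ∧ ImpFree ψ
  | .rels φ ψ => ImpFree φ ∧ ImpFree ψ
  | .prev φ => ImpFree φ
  | .wprev φ => ImpFree φ
  | .next φ => ImpFree φ
  | .wnext φ => ImpFree φ
  | _ => True

/-- Boolean dual: swaps ∧/∨, ⊤/⊥, U/R, S/T, ○/ŏ, ●/weak-previous. -/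
def dual : TForm α → TForm α
  | .atom a => .atom a
  | .bot => .top
  | .top => .bot
  | .and φ ψ => .or (dual φ) (dual ψ)
  | .or φ ψ => .and (dual φ) (dual ψ)
  | .imp φ ψ => .imp (dual φ) (dual ψ)
  | .prev φ => .wprev (dual φ)
  | .wprev φ => .prev (dual φ)
  | .since φ ψ => .trigger (dual φ) (dual ψ)
  | .trigger φ ψ => .since (dual φ) (dual ψ)
  | .next φ => .wnext (dual φ)
  | .wnext φ => .next (dual φ)
  | .untl φ ψ => .rels (dual φ) (dual ψ)
  | .rels φ ψ => .untl (dual φ) (dual ψ)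

/-- Time-reversal σ: swaps each temporal connective with its past/future mirror. -/
def tswap : TForm α → TForm α
  | .atom a => .atom a
  | .bot => .bot
  | .top => .top
  | .and φ ψ => .and (tswap φ) (tswap ψ)
  | .or φ ψ => .or (tswap φ) (tswap ψ)
  | .imp φ ψ => .imp (tswap φ) (tswap ψ)
  | .prev φ => .next (tswap φ)
  | .next φ => .prev (tswap φ)
  | .wprev φ => .wnext (tswap φ)
  | .wnext φ => .wprev (tswap φ)
  | .since φ ψ => .untl (tswap φ) (tswap ψ)
  | .untl φ ψ => .since (tswap φ) (tswap ψ)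
  | .trigger φ ψ => .rels (tswap φ) (tswap ψ)
  | .rels φ ψ => .trigger (tswap φ) (tswap ψ)

lemma impFree_dual : ∀ φ : TForm α, ImpFree φ → ImpFree (dual φ) := by
  intro φ; induction φ <;> intro h <;>
    simp only [ImpFree, dual] at * <;> tauto

lemma dual_dual : ∀ φ : TForm α, dual (dual φ) = φ := by
  intro φ; induction φ <;> simp only [dual] <;> simp_all

lemma sat_eq_satL (lam : ℕ∞) (H T : ℕ → Set α) :
    ∀ φ : TForm α, ImpFree φ → ∀ k, (sat lam φ H T k ↔ satL lam φ H k) := by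
  intro φ
  induction φ with
  | atom a => intro _ k; simp [sat, satL]
  | bot => intro _ k; simp [sat, satL]
  | top => intro _ k; simp [sat, satL]
  | and φ ψ ih1 ih2 => intro h k; simp [sat, satL, ih1 h.1, ih2 h.2]
  | or φ ψ ih1 ih2 => intro h k; simp [sat, satL, ih1 h.1, ih2 h.2]
  | imp φ ψ _ _ => intro h; exact h.elim
  | prev φ ih => intro h k; simp [sat, satL, ih h]
  | wprev φ ih => intro h k; simp [sat, satL, ih h]
  | since φ ψ ih1 ih2 => intro h k; simp [sat, satL, ih1 h.1, ih2 h.2]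
  | trigger φ ψ ih1 ih2 => intro h k; simp [sat, satL, ih1 h.1, ih2 h.2]
  | next φ ih => intro h k; simp [sat, satL, ih h]
  | wnext φ ih => intro h k; simp [sat, satL, ih h]
  | untl φ ψ ih1 ih2 => intro h k; simp [sat, satL, ih1 h.1, ih2 h.2]
  | rels φ ψ ih1 ih2 => intro h k; simp [sat, satL, ih1 h.1, ih2 h.2]

lemma satL_dual (lam : ℕ∞) (H : ℕ → Set α) :
    ∀ φ : TForm α, ImpFree φ →
      ∀ k, (satL lam (dual φ) H k ↔ ¬ satL lam φ (fun i => (H i)ᶜ) k) := by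
  intro φ
  induction φ with
  | atom a => intro _ k; simp [satL, dual]
  | bot => intro _ k; simp [satL, dual]
  | top => intro _ k; simp [satL, dual]
  | and φ ψ ih1 ih2 =>
      intro h k; simp only [satL, dual, ih1 h.1, ih2 h.2]; tauto
  | or φ ψ ih1 ih2 =>
      intro h k; simp only [satL, dual, ih1 h.1, ih2 h.2]; tauto
  | imp φ ψ _ _ => intro h; exact h.elim
  | prev φ ih =>
      intro h k; simp only [satL, dual, ih h]
      constructor
      · rintro (h0 | hs) ⟨hk, hφ⟩
        · omega
        · exact hs hφ
      · intro hn
        by_cases h0 : k = 0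
        · exact Or.inl h0
        · exact Or.inr (fun hφ => hn ⟨by omega, hφ⟩)
  | wprev φ ih =>
      intro h k; simp only [satL, dual, ih h]
      constructor
      · rintro ⟨hk, hs⟩ (h0 | hφ)
        · omega
        · exact hs hφ
      · intro hn
        by_cases h0 : k = 0
        · exact absurd (Or.inl h0) hn
        · exact ⟨by omega, fun hφ => hn (Or.inr hφ)⟩
  | since φ ψ ih1 ih2 =>
      intro h k; simp only [satL, dual, ih1 h.1, ih2 h.2]
      constructor
      · rintro hT ⟨j, hj, hψ, hφ⟩
        rcases hT j hj with hψ' | ⟨i, hji, hik, hφ'⟩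
        · exact hψ' hψ
        · exact hφ' (hφ i hji hik)
      · intro hn j hj
        by_cases hψ : satL lam ψ (fun i => (H i)ᶜ) j
        · right
          by_contra hc
          push_neg at hc
          exact hn ⟨j, hj, hψ, hc⟩
        · exact Or.inl hψ
  | trigger φ ψ ih1 ih2 =>
      intro h k; simp only [satL, dual, ih1 h.1, ih2 h.2]
      constructor
      · rintro ⟨j, hj, hψ, hφ⟩ hT
        rcases hT j hj with hψ' | ⟨i, hji, hik, hφ'⟩
        · exact hψ hψ'
        · exact hφ i hji hik hφ'
      · intro hn
        by_contra hc
        push_neg at hc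
        refine hn (fun j hj => ?_)
        by_cases hψ : satL lam ψ (fun i => (H i)ᶜ) j
        · exact Or.inl hψ
        · obtain ⟨i, h1, h2, hφ⟩ := hc j hj (fun h => (hψ h).elim)
          exact Or.inr ⟨i, h1, h2, by tauto⟩
  | next φ ih =>
      intro h k; simp only [satL, dual, ih h]
      constructor
      · rintro (hk | hs) ⟨hk', hφ⟩
        · exact hk hk'
        · exact hs hφ
      · intro hn
        by_cases hk : ((k : ℕ∞) + 1 ≤ lam)
        · exact Or.inr (fun hφ => hn ⟨hk, hφ⟩)
        · exact Or.inl hk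
  | wnext φ ih =>
      intro h k; simp only [satL, dual, ih h]
      constructor
      · rintro ⟨hk, hs⟩ (hk' | hφ)
        · exact hk' hk
        · exact hs hφ
      · intro hn
        by_cases hk : ((k : ℕ∞) + 1 ≤ lam)
        · exact ⟨hk, fun hφ => hn (Or.inr hφ)⟩
        · exact absurd (Or.inl hk) hn
  | untl φ ψ ih1 ih2 =>
      intro h k; simp only [satL, dual, ih1 h.1, ih2 h.2]
      constructor
      · rintro hT ⟨j, hj, hjl, hψ, hφ⟩
        rcases hT j hj hjl with hψ' | ⟨i, h1, h2, hφ'⟩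
        · exact hψ' hψ
        · exact hφ' (hφ i h1 h2)
      · intro hn j hj hjl
        by_cases hψ : satL lam ψ (fun i => (H i)ᶜ) j
        · right
          by_contra hc
          push_neg at hc
          exact hn ⟨j, hj, hjl, hψ, hc⟩
        · exact Or.inl hψ
  | rels φ ψ ih1 ih2 =>
      intro h k; simp only [satL, dual, ih1 h.1, ih2 h.2]
      constructor
      · rintro ⟨j, hj, hjl, hψ, hφ⟩ hT
        rcases hT j hj hjl with hψ' | ⟨i, h1, h2, hφ'⟩
        · exact hψ hψ'
        · exact hφ i h1 h2 hφ'
      · intro hn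
        by_contra hc
        push_neg at hc
        refine hn (fun j hj hjl => ?_)
        by_cases hψ : satL lam ψ (fun i => (H i)ᶜ) j
        · exact Or.inl hψ
        · obtain ⟨i, h1, h2, hφ⟩ := hc j hj hjl (fun h => (hψ h).elim)
          exact Or.inr ⟨i, h1, h2, by tauto⟩

/-- One direction of boolean duality. -/
lemma boolean_duality_aux {α : Type} (φ ψ : TForm α) (hφ : ImpFree φ) (hψ : ImpFree ψ)
    (h : ∀ (lam : ℕ∞) (H T : ℕ → Set α), isHT H T → ∀ k : ℕ, (k : ℕ∞) ≤ lam →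
        (sat lam φ H T k ↔ sat lam ψ H T k)) :
    ∀ (lam : ℕ∞) (H T : ℕ → Set α), isHT H T → ∀ k : ℕ, (k : ℕ∞) ≤ lam →
        (sat lam (dual φ) H T k ↔ sat lam (dual ψ) H T k) := by
  intro lam H T hHT k hk
  have hHc : isHT (fun i => (H i)ᶜ) (fun i => (H i)ᶜ) := fun i => subset_rfl
  have key := h lam (fun i => (H i)ᶜ) (fun i => (H i)ᶜ) hHc k hk
  rw [sat_eq_satL lam _ _ φ hφ, sat_eq_satL lam _ _ ψ hψ] at key
  rw [sat_eq_satL lam H T _ (impFree_dual φ hφ), sat_eq_satL lam H T _ (impFree_dual ψ hψ),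
    satL_dual lam H φ hφ, satL_dual lam H ψ hψ]
  exact not_congr key

/-- Boolean Duality: for implication-free φ, ψ:
    φ ≡ ψ in THT iff δ(φ) ≡ δ(ψ) in THT. -/
theorem boolean_duality {α : Type} (φ ψ : TForm α) (hφ : ImpFree φ) (hψ : ImpFree ψ) :
    (∀ (lam : ℕ∞) (H T : ℕ → Set α), isHT H T → ∀ k : ℕ, (k : ℕ∞) ≤ lam →
        (sat lam φ H T k ↔ sat lam ψ H T k))
    ↔
    (∀ (lam : ℕ∞) (H T : ℕ → Set α), isHT H T → ∀ k : ℕ, (k : ℕ∞) ≤ lam →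
        (sat lam (dual φ) H T k ↔ sat lam (dual ψ) H T k)) := by
  constructor
  · exact boolean_duality_aux φ ψ hφ hψ
  · intro h
    have := boolean_duality_aux (dual φ) (dual ψ) (impFree_dual φ hφ) (impFree_dual ψ hψ) h
    rwa [dual_dual, dual_dual] at this
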